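/- Let k ≥ 2 and let Γ be a saturated precolored convex Θ^k-drawing of a graph G on n ≥ 2k − 1 vertices with coloring φ. Then for each color c ∈ {1,…,k}, the number of inner edges of color c is at least (n − 2k + 1)/(2k − 3), i.e., (2k−3)·|{e ∈ E(G) : φ(e) = c and e is an inner edge}| ≥ n − 2k + 1. -/

import Mathlib

/-- Points of the plane. -/
abbrev Pt : Type := ℝ × ℝ

/-- Two straight-line segments cross if some point lies in the interior
(open segment) of both. -/
def SegCross (a b c d : Pt) : Prop :=
  ∃ x : Pt, x ∈ openSegment ℝ a b ∧ x ∈ openSegment ℝ c d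

/-- Two edges (unordered pairs of vertices) cross in the drawing `p`. -/
def EdgeCross {V : Type} (p : V → Pt) (e f : Sym2 V) : Prop :=
  ∃ u v x y : V, e = s(u, v) ∧ f = s(x, y) ∧ SegCross (p u) (p v) (p x) (p y)

/-- The drawing `p` is injective and no three vertex points are collinear. -/
def GenPos {V : Type} (p : V → Pt) : Prop :=
  Function.Injective p ∧
    ∀ u v w : V, u ≠ v → u ≠ w → v ≠ w → ¬ Collinear ℝ ({p u, p v, p w} : Set Pt)

/-- The vertex points are in convex position: every vertex point is an extreme
point of the convex hull of all vertex points. -/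
def ConvexPos {V : Type} (p : V → Pt) : Prop :=
  ∀ v : V, p v ∈ Set.extremePoints ℝ (convexHull ℝ (Set.range p))

/-- A `k`-coloring of the edges of `G` is crossing-free if no two distinct
edges of the same color cross. -/
def CrossingFree {V : Type} {k : ℕ} (G : SimpleGraph V) (p : V → Pt)
    (φ : Sym2 V → Fin k) : Prop :=
  ∀ e ∈ G.edgeSet, ∀ f ∈ G.edgeSet, e ≠ f → φ e = φ f → ¬ EdgeCross p e f

open scoped Classical

/-- A precolored drawing `(G, p, φ)` is saturated: for every pair of distinct
non-adjacent vertices and every color `c`, assigning color `c` to the new edge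
`uv` yields a coloring that is not crossing-free. -/
def PrecoloredSaturated {V : Type} {k : ℕ} (G : SimpleGraph V) (p : V → Pt)
    (φ : Sym2 V → Fin k) : Prop :=
  ∀ u v : V, u ≠ v → ¬ G.Adj u v → ∀ c : Fin k,
    ¬ CrossingFree (G ⊔ SimpleGraph.fromEdgeSet {s(u, v)}) p
      (fun e => if e = s(u, v) then c else φ e)

/-- A (non-precolored) drawing of `G` is saturated for thickness `k`: for every
pair of distinct non-adjacent vertices `u, v`, the drawing of `G + uv` admits
no crossing-free `k`-coloring. -/
def Saturated {V : Type} (k : ℕ) (G : SimpleGraph V) (p : V → Pt) : Prop :=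
  ∀ u v : V, u ≠ v → ¬ G.Adj u v →
    ∀ φ : Sym2 V → Fin k,
      ¬ CrossingFree (G ⊔ SimpleGraph.fromEdgeSet {s(u, v)}) p φ

/-- Twice the signed area of the triangle `a b c`. -/
def det2 (a b c : Pt) : ℝ :=
  (b.1 - a.1) * (c.2 - a.2) - (b.2 - a.2) * (c.1 - a.1)

/-- An edge is an outer edge if its endpoints are consecutive on the boundary
of the convex hull of the vertex points, i.e. all other vertex points lie
strictly on one side of the line through its endpoints. -/
def IsOuterEdge {V : Type} (p : V → Pt) (e : Sym2 V) : Prop :=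
  ∃ u v : V, e = s(u, v) ∧
    ((∀ w : V, w ≠ u → w ≠ v → 0 < det2 (p u) (p v) (p w)) ∨
     (∀ w : V, w ≠ u → w ≠ v → det2 (p u) (p v) (p w) < 0))

/-- In a saturated precolored convex Θ^k-drawing (`k ≥ 2`) on
`n ≥ 2k-1` vertices, each color class contains at least `(n-2k+1)/(2k-3)`
inner edges. -/
-- ### Part 1: point-level lemmas about det2, segments, crossings

lemma det2_cyc (a b c : Pt) : det2 a b c = det2 b c a := by unfold det2; ring
lemma det2_swap23 (a b c : Pt) : det2 a b c = -det2 a c b := by unfold det2; ring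
lemma det2_swap12 (a b c : Pt) : det2 a b c = -det2 b a c := by unfold det2; ring
lemma det2_self12 (a b : Pt) : det2 a a b = 0 := by unfold det2; ring
lemma det2_self13 (a b : Pt) : det2 a b a = 0 := by unfold det2; ring
lemma det2_self23 (a b : Pt) : det2 a b b = 0 := by unfold det2; ring

lemma det2_affine (q r u v : Pt) (t : ℝ) :
    det2 q r ((1-t)•u + t•v) = (1-t) * det2 q r u + t * det2 q r v := by
  simp [det2, Prod.smul_fst, Prod.smul_snd, smul_eq_mul]; ring

/-- distinctness from a nonzero determinant -/
lemma det2_ne_zero_distinct {A B C : Pt} (h : det2 A B C ≠ 0) :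
    A ≠ B ∧ A ≠ C ∧ B ≠ C := by
  refine ⟨?_, ?_, ?_⟩ <;> rintro rfl
  · exact h (det2_self12 _ _)
  · exact h (det2_self13 _ _)
  · exact h (det2_self23 _ _)

lemma mem_open_iff {x u v : Pt} :
    x ∈ openSegment ℝ u v ↔ ∃ t : ℝ, 0 < t ∧ t < 1 ∧ x = (1-t)•u + t•v := by
  rw [openSegment_eq_image]
  constructor
  · rintro ⟨t, ⟨h0, h1⟩, rfl⟩; exact ⟨t, h0, h1, rfl⟩
  · rintro ⟨t, h0, h1, rfl⟩; exact ⟨t, ⟨h0, h1⟩, rfl⟩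

/-- evaluation of the affine functional `det2 q r ·` on an open segment -/
lemma det2_open_eval {q r x u v : Pt} (hx : x ∈ openSegment ℝ u v) :
    ∃ t : ℝ, 0 < t ∧ t < 1 ∧ det2 q r x = (1-t) * det2 q r u + t * det2 q r v := by
  obtain ⟨t, h0, h1, rfl⟩ := mem_open_iff.1 hx
  exact ⟨t, h0, h1, det2_affine _ _ _ _ _⟩

/-- a point with zero det2 lies on the line through `A` and `B` -/
lemma det2_zero_param {A B X : Pt} (hAB : A ≠ B) (h : det2 A B X = 0) :
    ∃ u : ℝ, X = (1-u)•A + u•B := by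
  have hAB' : B.1 - A.1 ≠ 0 ∨ B.2 - A.2 ≠ 0 := by
    by_contra hc
    push_neg at hc
    exact hAB (Prod.ext (by linarith [hc.1]) (by linarith [hc.2]))
  unfold det2 at h
  rcases hAB' with h1 | h2
  · refine ⟨(X.1 - A.1)/(B.1 - A.1), ?_⟩
    have hx1 : ((X.1 - A.1)/(B.1 - A.1)) * (B.1 - A.1) = X.1 - A.1 := by
      field_simp
    have hx2 : ((X.1 - A.1)/(B.1 - A.1)) * (B.2 - A.2) = X.2 - A.2 := by
      rw [div_mul_eq_mul_div, div_eq_iff h1]; nlinarith [h]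
    refine Prod.ext ?_ ?_ <;>
      simp only [Prod.fst_add, Prod.snd_add, Prod.smul_fst, Prod.smul_snd, smul_eq_mul] <;>
      nlinarith [hx1, hx2]
  · refine ⟨(X.2 - A.2)/(B.2 - A.2), ?_⟩
    have hx2 : ((X.2 - A.2)/(B.2 - A.2)) * (B.2 - A.2) = X.2 - A.2 := by
      field_simp
    have hx1 : ((X.2 - A.2)/(B.2 - A.2)) * (B.1 - A.1) = X.1 - A.1 := by
      rw [div_mul_eq_mul_div, div_eq_iff h2]; nlinarith [h]
    refine Prod.ext ?_ ?_ <;>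
      simp only [Prod.fst_add, Prod.snd_add, Prod.smul_fst, Prod.smul_snd, smul_eq_mul] <;>
      nlinarith [hx1, hx2]

/-- zero det2 gives collinearity -/
lemma collinear_of_det2_zero {A B X : Pt} (h : det2 A B X = 0) :
    Collinear ℝ ({A, B, X} : Set Pt) := by
  by_cases hAB : A = B
  · subst hAB
    have : ({A, A, X} : Set Pt) = {A, X} := by simp
    rw [this]; exact collinear_pair ℝ A X
  · obtain ⟨u, rfl⟩ := det2_zero_param hAB h
    rw [collinear_iff_of_mem (Set.mem_insert A _)]
    refine ⟨B - A, ?_⟩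
    rintro P (rfl | rfl | rfl)
    · exact ⟨0, by simp⟩
    · exact ⟨1, by simp⟩
    · refine ⟨u, ?_⟩
      refine Prod.ext ?_ ?_ <;>
        simp only [Prod.fst_add, Prod.snd_add, Prod.smul_fst, Prod.smul_snd, smul_eq_mul,
          Prod.fst_sub, Prod.snd_sub, Prod.fst_vadd, Prod.snd_vadd, vadd_eq_add] <;> ring

/-- a positive convex combination of two nonnegative values, not both zero -/
lemma pos_combo {t P Q : ℝ} (h0 : 0 < t) (h1 : t < 1) (hP : 0 ≤ P) (hQ : 0 ≤ Q)
    (hPQ : 0 < P + Q) : 0 < (1-t) * P + t * Q := by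
  rcases eq_or_lt_of_le hP with h | h
  · have : 0 < Q := by linarith
    nlinarith
  · nlinarith [mul_nonneg (le_of_lt h0) hQ, mul_pos (by linarith : (0:ℝ) < 1 - t) h]

lemma neg_combo {t P Q : ℝ} (h0 : 0 < t) (h1 : t < 1) (hP : P ≤ 0) (hQ : Q ≤ 0)
    (hPQ : P + Q < 0) : (1-t) * P + t * Q < 0 := by
  have := pos_combo h0 h1 (by linarith : (0:ℝ) ≤ -P) (by linarith : (0:ℝ) ≤ -Q)
    (by linarith : (0:ℝ) < -P + -Q)
  linarith

/-- F4 direction: an actual segment crossing forces opposite sides. -/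
lemma segCross_opp {A B C D : Pt} (h : SegCross A B C D)
    (hC : det2 A B C ≠ 0) (hD : det2 A B D ≠ 0) :
    det2 A B C * det2 A B D < 0 := by
  obtain ⟨x, hx1, hx2⟩ := h
  obtain ⟨t, h0, h1, hev⟩ := det2_open_eval (q := A) (r := B) hx2
  have hx0 : det2 A B x = 0 := by
    obtain ⟨s, hs0, hs1, hev'⟩ := det2_open_eval (q := A) (r := B) hx1
    rw [hev', det2_self13, det2_self23]; ring
  rw [hx0] at hev
  rcases hC.lt_or_gt with h | h
  · rcases hD.lt_or_gt with h' | h'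
    · exfalso; nlinarith
    · nlinarith
  · rcases hD.lt_or_gt with h' | h'
    · nlinarith
    · exfalso; nlinarith

lemma segCross_symm {A B C D : Pt} (h : SegCross A B C D) : SegCross C D A B := by
  obtain ⟨x, h1, h2⟩ := h; exact ⟨x, h2, h1⟩

lemma segCross_swap1 {A B C D : Pt} (h : SegCross A B C D) : SegCross B A C D := by
  obtain ⟨x, h1, h2⟩ := h; exact ⟨x, (openSegment_symm ℝ A B) ▸ h1, h2⟩

lemma segCross_swap2 {A B C D : Pt} (h : SegCross A B C D) : SegCross A B D C := by
  obtain ⟨x, h1, h2⟩ := h; exact ⟨x, h1, (openSegment_symm ℝ C D) ▸ h2⟩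

/-- F7: segments sharing an endpoint do not cross (given general position). -/
lemma segCross_shared {A B D : Pt} (h : SegCross A B A D) (hd : det2 A B D ≠ 0) : False := by
  obtain ⟨x, hx1, hx2⟩ := h
  obtain ⟨t, h0, h1, rfl⟩ := mem_open_iff.1 hx1
  have hz : det2 A D ((1-t)•A + t•B) = 0 := by
    obtain ⟨s, hs0, hs1, hev'⟩ := det2_open_eval (q := A) (r := D) hx2
    rw [hev', det2_self13, det2_self23]; ring
  rw [det2_affine, det2_self13] at hz
  have : det2 A D B = 0 := by
    have := hz; nlinarith
  rw [det2_swap23] at hd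
  rw [this] at hd; simp at hd
-- ### Part 2: crossing construction (F1) and convex-position parity (F2)

/-- F1: opposite sides both ways gives an actual crossing (construction). -/
lemma cross_construct {A B C D : Pt} (h1 : 0 < det2 A B C) (h2 : det2 A B D < 0)
    (h34 : det2 C D A * det2 C D B < 0) : SegCross A B C D := by
  set s1 := det2 A B C with hs1
  set s2 := det2 A B D with hs2
  set s3 := det2 C D A with hs3
  set s4 := det2 C D B with hs4
  have hs12 : s1 - s2 > 0 := by linarith
  set t := s1 / (s1 - s2) with ht
  have ht0 : 0 < t := div_pos h1 hs12
  have ht1 : t < 1 := by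
    rw [div_lt_one hs12]; linarith
  set x := (1-t) • C + t • D with hx
  have hxC : det2 A B x = 0 := by
    rw [hx, det2_affine, ← hs1, ← hs2, ht]; field_simp; ring
  have hxCD : det2 C D x = 0 := by
    rw [hx, det2_affine, det2_self13, det2_self23]; ring
  have hAB : A ≠ B :=
    (det2_ne_zero_distinct (show det2 A B C ≠ 0 from ne_of_gt h1)).1
  obtain ⟨u, hu⟩ := det2_zero_param hAB hxC
  have huev : det2 C D x = (1-u) * s3 + u * s4 := by
    rw [hu, det2_affine, ← hs3, ← hs4]
  rw [hxCD] at huev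
  have hu0 : 0 < u ∧ u < 1 := by
    constructor
    · rcases lt_or_ge 0 u with h | h
      · exact h
      · exfalso
        rcases hs3.symm ▸ h34 with _
        -- case analysis on sign of s3
        rcases lt_trichotomy s3 0 with h3 | h3 | h3
        · have h4 : 0 < s4 := by
            rcases mul_neg_iff.1 h34 with ⟨_, _⟩ | ⟨_, _⟩ <;> linarith
          nlinarith
        · rw [h3] at h34; simp at h34
        · have h4 : s4 < 0 := by
            rcases mul_neg_iff.1 h34 with ⟨_, _⟩ | ⟨_, _⟩ <;> linarith
          nlinarith
    · rcases lt_or_ge u 1 with h | h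
      · exact h
      · exfalso
        rcases lt_trichotomy s3 0 with h3 | h3 | h3
        · have h4 : 0 < s4 := by
            rcases mul_neg_iff.1 h34 with ⟨_, _⟩ | ⟨_, _⟩ <;> linarith
          nlinarith
        · rw [h3] at h34; simp at h34
        · have h4 : s4 < 0 := by
            rcases mul_neg_iff.1 h34 with ⟨_, _⟩ | ⟨_, _⟩ <;> linarith
          nlinarith
  exact ⟨x, mem_open_iff.2 ⟨u, hu0.1, hu0.2, hu⟩, mem_open_iff.2 ⟨t, ht0, ht1, hx⟩⟩

section Geometry

variable {n : ℕ} {p : Fin n → Pt}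

/-- nonzero determinants for distinct vertices -/
lemma gp_det (hgen : GenPos p) {a b c : Fin n} (hab : a ≠ b) (hac : a ≠ c) (hbc : b ≠ c) :
    det2 (p a) (p b) (p c) ≠ 0 := by
  intro h
  exact hgen.2 a b c hab hac hbc (collinear_of_det2_zero h)

/-- F2 core: the sign pattern (+,-,+,+) forces a point inside the hull of
the others, contradicting convex position. -/
lemma convex_parity_core (hconv : ConvexPos p) {a b c d : Fin n}
    (h1 : 0 < det2 (p a) (p b) (p c)) (h2 : det2 (p a) (p b) (p d) < 0)
    (h3 : 0 < det2 (p c) (p d) (p a)) (h4 : 0 < det2 (p c) (p d) (p b)) : False := by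
  set A := p a; set B := p b; set C := p c; set D := p d
  set s1 := det2 A B C with hs1
  set s2 := det2 A B D with hs2
  set s3 := det2 C D A with hs3
  set s4 := det2 C D B with hs4
  have hcyc3 : s3 = det2 A C D := by rw [det2_cyc A C D]
  have hcyc4 : s4 = det2 B C D := by rw [det2_cyc B C D]
  -- Cramer identities
  have hcr1 : s4 * A.1 = s3 * B.1 - s2 * C.1 + s1 * D.1 := by
    rw [hcyc3, hcyc4, hs1, hs2]; unfold det2; ring
  have hcr2 : s4 * A.2 = s3 * B.2 - s2 * C.2 + s1 * D.2 := by
    rw [hcyc3, hcyc4, hs1, hs2]; unfold det2; ring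
  have hsum : s4 = s1 - s2 + s3 := by
    rw [hcyc3, hcyc4, hs1, hs2]; unfold det2; ring
  have hs12 : (0:ℝ) < s1 - s2 := by linarith
  set μ := s1 / (s1 - s2) with hμ
  have hμ0 : 0 < μ := div_pos h1 hs12
  have hμ1 : μ < 1 := by rw [div_lt_one hs12]; linarith
  set q := (1-μ) • C + μ • D with hq
  set θ := (s1 - s2) / s4 with hθ
  have hθ0 : 0 < θ := div_pos hs12 h4
  have hθ1 : θ < 1 := by rw [div_lt_one h4]; linarith
  have hAq : A = (1-θ) • B + θ • q := by
    have h4ne : s4 ≠ 0 := ne_of_gt h4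
    have h12ne : s1 - s2 ≠ 0 := ne_of_gt hs12
    refine Prod.ext ?_ ?_ <;>
      simp only [hq, hθ, hμ, Prod.fst_add, Prod.snd_add, Prod.smul_fst, Prod.smul_snd,
        smul_eq_mul] <;> field_simp
    · linear_combination hcr1 - B.1 * hsum
    · linear_combination hcr2 - B.2 * hsum
  -- convex hull membership
  have hBmem : B ∈ convexHull ℝ (Set.range p) :=
    subset_convexHull ℝ _ (Set.mem_range_self b)
  have hqmem : q ∈ convexHull ℝ (Set.range p) := by
    have : q ∈ segment ℝ C D :=
      openSegment_subset_segment ℝ C D (mem_open_iff.2 ⟨μ, hμ0, hμ1, hq⟩)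
    exact (convex_convexHull ℝ _).segment_subset
      (subset_convexHull ℝ _ (Set.mem_range_self c))
      (subset_convexHull ℝ _ (Set.mem_range_self d)) this
  have hext := (mem_extremePoints.1 (hconv a)).2 B hBmem q hqmem
    (mem_open_iff.2 ⟨θ, hθ0, hθ1, hAq⟩)
  have hABne : A ≠ B := by
    intro h; apply absurd h1; rw [hs1, h, det2_self12]; simp
  exact hABne hext.1.symm
-- ### Part 3: vertex-level and Sym2-level crossing predicates

variable {n : ℕ}

/-- combinatorial crossing (one direction): `c` and `d` are strictly on
opposite sides of the line through `a` and `b`. -/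
def VCross (p : Fin n → Pt) (a b c d : Fin n) : Prop :=
  det2 (p a) (p b) (p c) * det2 (p a) (p b) (p d) < 0

/-- combinatorial crossing of two unordered pairs. -/
def SymCross (p : Fin n → Pt) (e f : Sym2 (Fin n)) : Prop :=
  ∃ a b c d : Fin n, e = s(a,b) ∧ f = s(c,d) ∧ VCross p a b c d ∧ VCross p c d a b

variable {p : Fin n → Pt}

lemma vcross_distinct {a b c d : Fin n} (h : VCross p a b c d) :
    a ≠ b ∧ a ≠ c ∧ a ≠ d ∧ b ≠ c ∧ b ≠ d ∧ c ≠ d := by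
  have h1 : det2 (p a) (p b) (p c) ≠ 0 := by
    intro hz; rw [VCross, hz] at h; simp at h
  have h2 : det2 (p a) (p b) (p d) ≠ 0 := by
    intro hz; rw [VCross, hz] at h; simp at h
  obtain ⟨e1, e2, e3⟩ := det2_ne_zero_distinct h1
  obtain ⟨f1, f2, f3⟩ := det2_ne_zero_distinct h2
  have hcd : c ≠ d := by
    rintro rfl
    rw [VCross] at h
    nlinarith [sq_nonneg (det2 (p a) (p b) (p c))]
  exact ⟨fun h' => e1 (congrArg p h'), fun h' => e2 (congrArg p h'),
    fun h' => f2 (congrArg p h'), fun h' => e3 (congrArg p h'),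
    fun h' => f3 (congrArg p h'), hcd⟩

lemma vcross_swap1 {a b c d : Fin n} (h : VCross p a b c d) : VCross p b a c d := by
  have key : det2 (p b) (p a) (p c) * det2 (p b) (p a) (p d)
      = det2 (p a) (p b) (p c) * det2 (p a) (p b) (p d) := by
    rw [det2_swap12 (p b) (p a) (p c), det2_swap12 (p b) (p a) (p d)]; ring
  rw [VCross, key]; exact h

lemma vcross_swap2 {a b c d : Fin n} (h : VCross p a b c d) : VCross p a b d c := by
  rw [VCross] at h ⊢; nlinarith [h]

/-- F2, full version: crossing one way and strictly-not-crossing the other way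
is impossible in convex position. -/
lemma convex_parity (hconv : ConvexPos p) {a b c d : Fin n}
    (h12 : VCross p a b c d)
    (h34 : 0 < det2 (p c) (p d) (p a) * det2 (p c) (p d) (p b)) : False := by
  rw [VCross] at h12
  set s1 := det2 (p a) (p b) (p c) with hs1
  set s2 := det2 (p a) (p b) (p d) with hs2
  set s3 := det2 (p c) (p d) (p a) with hs3
  set s4 := det2 (p c) (p d) (p b) with hs4
  have e1 : det2 (p b) (p a) (p c) = -s1 := by rw [hs1, ← det2_swap12]
  have e2 : det2 (p b) (p a) (p d) = -s2 := by rw [hs2, ← det2_swap12]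
  have e3 : det2 (p d) (p c) (p a) = -s3 := by rw [hs3, ← det2_swap12]
  have e4 : det2 (p d) (p c) (p b) = -s4 := by rw [hs4, ← det2_swap12]
  rcases mul_neg_iff.1 h12 with ⟨ha1, ha2⟩ | ⟨ha1, ha2⟩ <;>
    rcases mul_pos_iff.1 h34 with ⟨hb1, hb2⟩ | ⟨hb1, hb2⟩
  · exact convex_parity_core hconv ha1 ha2 hb1 hb2
  · exact convex_parity_core hconv (a := b) (b := a) (c := d) (d := c)
      (by rw [e2]; linarith) (by rw [e1]; linarith) (by rw [e4]; linarith)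
      (by rw [e3]; linarith)
  · exact convex_parity_core hconv (a := b) (b := a) (c := c) (d := d)
      (by rw [e1]; linarith) (by rw [e2]; linarith) hb2 hb1
  · exact convex_parity_core hconv (a := a) (b := b) (c := d) (d := c)
      (by linarith) (by linarith) (by rw [e3]; linarith) (by rw [e4]; linarith)

/-- In convex position, one-way crossing flips. -/
lemma vcross_flip (hgen : GenPos p) (hconv : ConvexPos p) {a b c d : Fin n}
    (h : VCross p a b c d) : VCross p c d a b := by
  obtain ⟨hab, hac, had, hbc, hbd, hcd⟩ := vcross_distinct h
  have h3 : det2 (p c) (p d) (p a) ≠ 0 := gp_det hgen hcd hac.symm had.symm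
  have h4 : det2 (p c) (p d) (p b) ≠ 0 := gp_det hgen hcd hbc.symm hbd.symm
  rcases lt_trichotomy (det2 (p c) (p d) (p a) * det2 (p c) (p d) (p b)) 0 with hlt | heq | hgt
  · exact hlt
  · exact absurd heq (mul_ne_zero h3 h4)
  · exact absurd (convex_parity hconv h hgt) id

lemma symCross_of_vcross (hgen : GenPos p) (hconv : ConvexPos p) {a b c d : Fin n}
    (h : VCross p a b c d) : SymCross p s(a,b) s(c,d) :=
  ⟨a, b, c, d, rfl, rfl, h, vcross_flip hgen hconv h⟩

lemma segCross_of_vcross (hgen : GenPos p) (hconv : ConvexPos p) {a b c d : Fin n}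
    (h : VCross p a b c d) : SegCross (p a) (p b) (p c) (p d) := by
  have h34 := vcross_flip hgen hconv h
  rw [VCross] at h h34
  rcases mul_neg_iff.1 h with ⟨h1, h2⟩ | ⟨h1, h2⟩
  · exact cross_construct h1 h2 h34
  · have hr := cross_construct (A := p b) (B := p a) (C := p c) (D := p d)
      (by rw [det2_swap12]; linarith)
      (by rw [det2_swap12]; linarith) (by rw [mul_comm]; exact h34)
    exact segCross_swap1 hr

/-- extraction of `VCross` data from `SymCross` for arbitrary representatives -/
lemma symCross_elim {e f : Sym2 (Fin n)} (h : SymCross p e f) {a b c d : Fin n}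
    (he : e = s(a,b)) (hf : f = s(c,d)) : VCross p a b c d ∧ VCross p c d a b := by
  obtain ⟨x, y, z, w, hx, hz, h1, h2⟩ := h
  rw [he] at hx; rw [hf] at hz
  rcases Sym2.eq_iff.1 hx.symm with ⟨rfl, rfl⟩ | ⟨rfl, rfl⟩ <;>
    rcases Sym2.eq_iff.1 hz.symm with ⟨rfl, rfl⟩ | ⟨rfl, rfl⟩
  · exact ⟨h1, h2⟩
  · exact ⟨vcross_swap2 h1, vcross_swap1 h2⟩
  · exact ⟨vcross_swap1 h1, vcross_swap2 h2⟩
  · exact ⟨vcross_swap1 (vcross_swap2 h1), vcross_swap1 (vcross_swap2 h2)⟩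

lemma symCross_symm {e f : Sym2 (Fin n)} (h : SymCross p e f) : SymCross p f e := by
  obtain ⟨x, y, z, w, hx, hz, h1, h2⟩ := h
  exact ⟨z, w, x, y, hz, hx, h2, h1⟩

lemma edgeCross_of_symCross (hgen : GenPos p) (hconv : ConvexPos p) {e f : Sym2 (Fin n)}
    (h : SymCross p e f) : EdgeCross p e f := by
  obtain ⟨x, y, z, w, hx, hz, h1, h2⟩ := h
  exact ⟨x, y, z, w, hx, hz, segCross_of_vcross hgen hconv h1⟩

lemma symCross_of_edgeCross (hgen : GenPos p) {e f : Sym2 (Fin n)}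
    (he : ¬ e.IsDiag) (hf : ¬ f.IsDiag) (hef : e ≠ f) (h : EdgeCross p e f) :
    SymCross p e f := by
  obtain ⟨u, v, x, y, hu, hx, hseg⟩ := h
  subst hu; subst hx
  have huv : u ≠ v := fun h' => he (by rw [h']; exact Sym2.mk_isDiag_iff.2 rfl)
  have hxy : x ≠ y := fun h' => hf (by rw [h']; exact Sym2.mk_isDiag_iff.2 rfl)
  have hne : ¬ (u = x ∧ v = y) ∧ ¬ (u = y ∧ v = x) := by
    constructor <;> rintro ⟨rfl, rfl⟩ <;> exact hef (by rw [Sym2.eq_iff]; tauto)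
  by_cases hux : u = x
  · subst hux
    have hvy : v ≠ y := fun h' => hne.1 ⟨rfl, h'⟩
    have huy : u ≠ y := hxy
    exact absurd (segCross_shared hseg (gp_det hgen huv huy hvy)) id
  by_cases huy : u = y
  · subst huy
    have hvx : v ≠ x := fun h' => hne.2 ⟨rfl, h'⟩
    exact absurd (segCross_shared (segCross_swap2 hseg)
      (gp_det hgen huv (Ne.symm hxy) hvx)) id
  by_cases hvx : v = x
  · subst hvx
    exact absurd (segCross_shared (segCross_swap1 hseg)
      (gp_det hgen huv.symm hxy huy)) id
  by_cases hvy : v = y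
  · subst hvy
    exact absurd (segCross_shared (segCross_swap2 (segCross_swap1 hseg))
      (gp_det hgen huv.symm hvx hux)) id
  -- all four endpoints distinct
  have d1 : det2 (p u) (p v) (p x) ≠ 0 := gp_det hgen huv hux hvx
  have d2 : det2 (p u) (p v) (p y) ≠ 0 := gp_det hgen huv huy hvy
  have d3 : det2 (p x) (p y) (p u) ≠ 0 := gp_det hgen hxy (Ne.symm hux) (Ne.symm huy)
  have d4 : det2 (p x) (p y) (p v) ≠ 0 := gp_det hgen hxy (Ne.symm hvx) (Ne.symm hvy)
  exact ⟨u, v, x, y, rfl, rfl, segCross_opp hseg d1 d2,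
    segCross_opp (segCross_symm hseg) d3 d4⟩

/-- an edge participating in a crossing is an inner edge -/
lemma not_outer_of_vcross {x y u v : Fin n} (h : VCross p x y u v) :
    ¬ IsOuterEdge p s(x,y) := by
  rintro ⟨u', v', heq, hside⟩
  obtain ⟨hxy, hxu, hxv, hyu, hyv, huv⟩ := vcross_distinct h
  rw [VCross] at h
  rcases Sym2.eq_iff.1 heq with ⟨rfl, rfl⟩ | ⟨h1, h2⟩
  · rcases hside with hs | hs
    · have p1 := hs u (Ne.symm hxu) (Ne.symm hyu)
      have p2 := hs v (Ne.symm hxv) (Ne.symm hyv)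
      nlinarith [mul_pos p1 p2]
    · have p1 := hs u (Ne.symm hxu) (Ne.symm hyu)
      have p2 := hs v (Ne.symm hxv) (Ne.symm hyv)
      nlinarith [mul_pos_of_neg_of_neg p1 p2]
  · subst h1; subst h2
    have e1 := det2_swap12 (p y) (p x) (p u)
    have e2 := det2_swap12 (p y) (p x) (p v)
    rcases hside with hs | hs
    · have p1 : det2 (p x) (p y) (p u) < 0 := by
        have := hs u (Ne.symm hyu) (Ne.symm hxu); linarith
      have p2 : det2 (p x) (p y) (p v) < 0 := by
        have := hs v (Ne.symm hyv) (Ne.symm hxv); linarith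
      nlinarith [mul_pos_of_neg_of_neg p1 p2]
    · have p1 : 0 < det2 (p x) (p y) (p u) := by
        have := hs u (Ne.symm hyu) (Ne.symm hxu); linarith
      have p2 : 0 < det2 (p x) (p y) (p v) := by
        have := hs v (Ne.symm hyv) (Ne.symm hxv); linarith
      nlinarith [mul_pos p1 p2]
-- ### Part 4: saturation blockers and the side-witness propagation lemma

lemma edgeCross_symm {e f : Sym2 (Fin n)} (h : EdgeCross p e f) : EdgeCross p f e := by
  obtain ⟨u, v, x, y, hu, hx, hseg⟩ := h
  exact ⟨x, y, u, v, hx, hu, segCross_symm hseg⟩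

/-- From saturation: every non-adjacent pair has, for every color `c`, an
edge of `G` of color `c` crossing it. -/
lemma blocker {k : ℕ} {G : SimpleGraph (Fin n)} {φ : Sym2 (Fin n) → Fin k}
    (hgen : GenPos p) (hφ : CrossingFree G p φ) (hsat : PrecoloredSaturated G p φ)
    {u v : Fin n} (huv : u ≠ v) (hadj : ¬ G.Adj u v) (c : Fin k) :
    ∃ x y : Fin n, s(x,y) ∈ G.edgeSet ∧ φ s(x,y) = c ∧
      VCross p x y u v ∧ VCross p u v x y := by
  have h := hsat u v huv hadj c
  rw [CrossingFree] at h
  push_neg at h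
  obtain ⟨e, he, f, hf, hef, heq, hcross⟩ := h
  have huvG : s(u,v) ∉ G.edgeSet := fun h' => hadj ((SimpleGraph.mem_edgeSet G).1 h')
  have hmem : ∀ g : Sym2 (Fin n), g ∈ (G ⊔ SimpleGraph.fromEdgeSet {s(u,v)}).edgeSet →
      g ∈ G.edgeSet ∨ g = s(u,v) := by
    intro g hg
    rw [SimpleGraph.edgeSet_sup, Set.mem_union, SimpleGraph.edgeSet_fromEdgeSet] at hg
    rcases hg with h' | ⟨h', _⟩
    · exact Or.inl h'
    · exact Or.inr h'
  have safe : ∀ e' f' : Sym2 (Fin n), e' = s(u,v) → f' ∈ G.edgeSet → e' ≠ f' →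
      φ f' = c →
      EdgeCross p e' f' →
      ∃ x y : Fin n, s(x,y) ∈ G.edgeSet ∧ φ s(x,y) = c ∧
        VCross p x y u v ∧ VCross p u v x y := by
    intro e' f' he' hf' hef' heq' hcross'
    subst he'
    have hnd1 : ¬ (s(u,v) : Sym2 (Fin n)).IsDiag := by
      rw [Sym2.mk_isDiag_iff]; exact huv
    have hnd2 : ¬ f'.IsDiag := G.not_isDiag_of_mem_edgeSet hf'
    have hS : SymCross p s(u,v) f' := symCross_of_edgeCross hgen hnd1 hnd2 hef' hcross'
    obtain ⟨a, b, x, y, hab, hxy, h1, h2⟩ := hS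
    have hVC := symCross_elim (symCross_symm (⟨a,b,x,y,hab,hxy,h1,h2⟩ : SymCross p s(u,v) f'))
      (he := hxy) (hf := rfl)
    exact ⟨x, y, hxy ▸ hf', hxy ▸ heq', hVC.1, hVC.2⟩
  rcases hmem e he with heG | heuv
  · rcases hmem f hf with hfG | hfuv
    · exfalso
      have hene : e ≠ s(u,v) := fun h' => huvG (h' ▸ heG)
      have hfne : f ≠ s(u,v) := fun h' => huvG (h' ▸ hfG)
      rw [if_neg hene, if_neg hfne] at heq
      exact hφ e heG f hfG hef heq hcross
    · have hene : e ≠ s(u,v) := fun h' => huvG (h' ▸ heG)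
      rw [if_pos hfuv, if_neg hene] at heq
      exact safe f e hfuv heG (Ne.symm hef) heq (edgeCross_symm hcross)
  · rcases hmem f hf with hfG | hfuv
    · have hfne : f ≠ s(u,v) := fun h' => huvG (h' ▸ hfG)
      rw [if_pos heuv, if_neg hfne] at heq
      exact safe e f heuv hfG hef heq.symm hcross
    · exact absurd (heuv.trans hfuv.symm) hef

/-- F6: auxiliary impossibility used for witness propagation. -/
lemma f6 (hgen : GenPos p) (hconv : ConvexPos p) {a b z w : Fin n}
    (h1 : 0 < det2 (p a) (p b) (p z)) (h2 : det2 (p a) (p b) (p w) < 0)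
    (C D : Pt) (hLa : 0 ≤ det2 C D (p a)) (hLb : 0 ≤ det2 C D (p b))
    (hLab : 0 < det2 C D (p a) + det2 C D (p b))
    (hLz : det2 C D (p z) = 0) (hLw : det2 C D (p w) < 0) : False := by
  have hv : VCross p a b z w := mul_neg_of_pos_of_neg h1 h2
  obtain ⟨x, hx1, hx2⟩ := segCross_of_vcross hgen hconv hv
  obtain ⟨t, ht0, ht1, hev1⟩ := det2_open_eval (q := C) (r := D) hx1
  obtain ⟨s, hs0, hs1, hev2⟩ := det2_open_eval (q := C) (r := D) hx2
  have hpos : 0 < det2 C D x := by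
    rw [hev1]; exact pos_combo ht0 ht1 hLa hLb hLab
  have hneg : det2 C D x < 0 := by
    rw [hev2, hLz]
    nlinarith
  linarith

/-- F5: witness propagation to the positive side of a splitting chord. -/
lemma f5 (hgen : GenPos p) (hconv : ConvexPos p) {W : Finset (Fin n)} {a b c d w : Fin n}
    (hab : a ≠ b) (hcd : c ≠ d)
    (hcW : c = a ∨ c = b ∨ (c ∈ W ∧ 0 < det2 (p a) (p b) (p c)))
    (hdW : d = a ∨ d = b ∨ (d ∈ W ∧ 0 < det2 (p a) (p b) (p d)))
    (hne : s(c,d) ≠ (s(a,b) : Sym2 (Fin n)))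
    (hwW : w ∈ W) (hw : det2 (p c) (p d) (p w) < 0) :
    ∃ w', (w' = a ∨ w' = b ∨ (w' ∈ W ∧ 0 < det2 (p a) (p b) (p w'))) ∧
      det2 (p c) (p d) (p w') < 0 := by
  -- trivial case: w is already on the good side
  by_cases hwgood : w = a ∨ w = b ∨ 0 < det2 (p a) (p b) (p w)
  · rcases hwgood with h' | h' | h'
    · exact ⟨w, Or.inl h', hw⟩
    · exact ⟨w, Or.inr (Or.inl h'), hw⟩
    · exact ⟨w, Or.inr (Or.inr ⟨hwW, h'⟩), hw⟩
  push_neg at hwgood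
  obtain ⟨hwa, hwb, hwside⟩ := hwgood
  have hwneg : det2 (p a) (p b) (p w) < 0 :=
    lt_of_le_of_ne hwside (gp_det hgen hab (Ne.symm hwa) (Ne.symm hwb))
  -- w is distinct from c, d
  have hwc : w ≠ c := by
    rintro rfl; rw [det2_self13] at hw; exact absurd hw (by simp)
  have hwd : w ≠ d := by
    rintro rfl; rw [det2_self23] at hw; exact absurd hw (by simp)
  -- easy cases: a or b already works
  by_cases hca : det2 (p c) (p d) (p a) < 0
  · exact ⟨a, Or.inl rfl, hca⟩
  by_cases hcb : det2 (p c) (p d) (p b) < 0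
  · exact ⟨b, Or.inr (Or.inl rfl), hcb⟩
  push_neg at hca hcb
  exfalso
  by_cases hc_a : c = a
  · -- then d must have det2 (p a) (p b) (p d) > 0, whence det2 (p c) (p d) (p b) < 0
    have hd_a : d ≠ a := fun h' => hcd (hc_a.trans h'.symm)
    have hd_b : d ≠ b := fun h' => hne (by rw [hc_a, h'])
    rcases hdW with h' | h' | ⟨_, h'⟩
    · exact hd_a h'
    · exact hd_b h'
    · have hkey : det2 (p c) (p d) (p b) = -det2 (p a) (p b) (p d) := by
        rw [hc_a, det2_swap23]
      rw [hkey] at hcb; linarith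
  by_cases hd_b : d = b
  · have hc_b : c ≠ b := fun h' => hcd (h'.trans hd_b.symm)
    rcases hcW with h' | h' | ⟨_, h'⟩
    · exact hc_a h'
    · exact hc_b h'
    · have hkey : det2 (p c) (p d) (p a) = -det2 (p a) (p b) (p c) := by
        rw [hd_b, det2_cyc (p c) (p b) (p a), det2_swap12 (p b) (p a) (p c)]
      rw [hkey] at hca; linarith
  by_cases hc_b : c = b
  · -- use F6 with z = d
    have hd_a : d ≠ a := fun h' => hne (by rw [hc_b, h', Sym2.eq_swap])
    have hd' : 0 < det2 (p a) (p b) (p d) := by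
      rcases hdW with h' | h' | ⟨_, h'⟩
      · exact absurd h' hd_a
      · exact absurd h' hd_b
      · exact h'
    have hLb : det2 (p c) (p d) (p b) = 0 := by rw [hc_b]; exact det2_self13 _ _
    have hLa : 0 < det2 (p c) (p d) (p a) :=
      hca.lt_of_ne (Ne.symm (gp_det hgen hcd hc_a hd_a))
    exact f6 hgen hconv hd' hwneg (p c) (p d) hca (le_of_eq hLb.symm)
      (by rw [hLb]; linarith) (det2_self23 _ _) hw
  by_cases hd_a : d = a
  · -- use F6 with z = c
    have hc' : 0 < det2 (p a) (p b) (p c) := by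
      rcases hcW with h' | h' | ⟨_, h'⟩
      · exact absurd h' hc_a
      · exact absurd h' hc_b
      · exact h'
    have hLb : 0 < det2 (p c) (p d) (p b) :=
      hcb.lt_of_ne (Ne.symm (gp_det hgen hcd hc_b hd_b))
    exact f6 hgen hconv hc' hwneg (p c) (p d) hca (le_of_lt hLb)
      (by linarith) (det2_self13 _ _) hw
  · -- generic case: all of a, b, c, d distinct; use F6 with z = c
    have hc' : 0 < det2 (p a) (p b) (p c) := by
      rcases hcW with h' | h' | ⟨_, h'⟩
      · exact absurd h' hc_a
      · exact absurd h' hc_b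
      · exact h'
    have hLa : 0 < det2 (p c) (p d) (p a) :=
      hca.lt_of_ne (Ne.symm (gp_det hgen hcd hc_a hd_a))
    exact f6 hgen hconv hc' hwneg (p c) (p d) hca (le_of_lt (hcb.lt_of_ne
        (Ne.symm (gp_det hgen hcd hc_b hd_b))))
      (by linarith) (det2_self13 _ _) hw
-- ### Part 5: counting non-crossing strict chords

lemma sym2_forall_mem {S : Finset (Fin n)} {c d : Fin n} :
    (∀ x ∈ (s(c,d) : Sym2 (Fin n)), x ∈ S) ↔ c ∈ S ∧ d ∈ S := by
  constructor
  · intro h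
    exact ⟨h c (Sym2.mem_mk_left c d), h d (Sym2.mem_mk_right c d)⟩
  · rintro ⟨h1, h2⟩ x hx
    rcases Sym2.mem_iff.1 hx with rfl | rfl
    · exact h1
    · exact h2

/-- cardinality of a one-sided vertex set -/
lemma wside_card {W : Finset (Fin n)} {a b : Fin n} (hab : a ≠ b) :
    (insert a (insert b (W.filter fun w => 0 < det2 (p a) (p b) (p w)))).card
      = (W.filter fun w => 0 < det2 (p a) (p b) (p w)).card + 2 := by
  have ha : a ∉ (W.filter fun w => 0 < det2 (p a) (p b) (p w)) := by
    simp [Finset.mem_filter, det2_self13]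
  have hb : b ∉ (W.filter fun w => 0 < det2 (p a) (p b) (p w)) := by
    simp [Finset.mem_filter, det2_self23]
  rw [Finset.card_insert_of_notMem (by simp [Finset.mem_insert, hab, ha]),
    Finset.card_insert_of_notMem hb]

/-- the two strict sides of a chord partition the rest of `W` -/
lemma side_partition (hgen : GenPos p) {W : Finset (Fin n)} {a b : Fin n}
    (haW : a ∈ W) (hbW : b ∈ W) (hab : a ≠ b) :
    (W.filter fun w => 0 < det2 (p a) (p b) (p w)).card
      + (W.filter fun w => det2 (p a) (p b) (p w) < 0).card + 2 = W.card := by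
  classical
  have hdisj1 : Disjoint (W.filter fun w => 0 < det2 (p a) (p b) (p w))
      (W.filter fun w => det2 (p a) (p b) (p w) < 0) := by
    rw [Finset.disjoint_left]
    intro x hx hx'
    rw [Finset.mem_filter] at hx hx'
    linarith [hx.2, hx'.2]
  have hdisj2 : Disjoint ((W.filter fun w => 0 < det2 (p a) (p b) (p w)) ∪
      (W.filter fun w => det2 (p a) (p b) (p w) < 0)) ({a, b} : Finset (Fin n)) := by
    rw [Finset.disjoint_right]
    intro x hx hx'
    rw [Finset.mem_union, Finset.mem_filter, Finset.mem_filter] at hx'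
    rcases Finset.mem_insert.1 hx with rfl | hx2
    · rcases hx' with ⟨_, h'⟩ | ⟨_, h'⟩ <;>
        (rw [det2_self13] at h'; linarith)
    · rw [Finset.mem_singleton] at hx2; subst hx2
      rcases hx' with ⟨_, h'⟩ | ⟨_, h'⟩ <;>
        (rw [det2_self23] at h'; linarith)
  have hunion : (W.filter fun w => 0 < det2 (p a) (p b) (p w)) ∪
      (W.filter fun w => det2 (p a) (p b) (p w) < 0) ∪ ({a, b} : Finset (Fin n)) = W := by
    ext x
    simp only [Finset.mem_union, Finset.mem_filter, Finset.mem_insert, Finset.mem_singleton]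
    constructor
    · rintro ((⟨h, _⟩ | ⟨h, _⟩) | (rfl | rfl)) <;> first | exact h | exact haW | exact hbW
    · intro hx
      by_cases hxa : x = a
      · exact Or.inr (Or.inl hxa)
      by_cases hxb : x = b
      · exact Or.inr (Or.inr hxb)
      rcases (gp_det hgen hab (Ne.symm hxa) (Ne.symm hxb)).lt_or_gt with h' | h'
      · exact Or.inl (Or.inr ⟨hx, h'⟩)
      · exact Or.inl (Or.inl ⟨hx, h'⟩)
  have hcab : ({a, b} : Finset (Fin n)).card = 2 := by
    rw [Finset.card_insert_of_notMem (by simp [hab]), Finset.card_singleton]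
  calc (W.filter fun w => 0 < det2 (p a) (p b) (p w)).card
      + (W.filter fun w => det2 (p a) (p b) (p w) < 0).card + 2
      = ((W.filter fun w => 0 < det2 (p a) (p b) (p w)) ∪
          (W.filter fun w => det2 (p a) (p b) (p w) < 0)).card
          + ({a, b} : Finset (Fin n)).card := by
        rw [Finset.card_union_of_disjoint hdisj1, hcab]
    _ = ((W.filter fun w => 0 < det2 (p a) (p b) (p w)) ∪
          (W.filter fun w => det2 (p a) (p b) (p w) < 0) ∪ ({a,b} : Finset (Fin n))).card := by
        rw [Finset.card_union_of_disjoint hdisj2]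
    _ = W.card := by rw [hunion]
-- ### Part 6: the splitting dichotomy and the chord-count lemma

/-- a chord not crossing `s(a,b)` lies (weakly) on one side of it -/
lemma chord_side_dichotomy (hgen : GenPos p) {W : Finset (Fin n)} {a b c d : Fin n}
    (hab : a ≠ b) (hcd : c ≠ d) (hcW : c ∈ W) (hdW : d ∈ W)
    (hne : (s(c,d) : Sym2 (Fin n)) ≠ s(a,b))
    (hnv : ¬ VCross p a b c d) :
    (c ∈ insert a (insert b (W.filter fun w => 0 < det2 (p a) (p b) (p w))) ∧
     d ∈ insert a (insert b (W.filter fun w => 0 < det2 (p a) (p b) (p w)))) ∨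
    (c ∈ insert b (insert a (W.filter fun w => 0 < det2 (p b) (p a) (p w))) ∧
     d ∈ insert b (insert a (W.filter fun w => 0 < det2 (p b) (p a) (p w)))) := by
  have hswap : ∀ x : Fin n, det2 (p b) (p a) (p x) = -det2 (p a) (p b) (p x) := by
    intro x; rw [det2_swap12]
  simp only [Finset.mem_insert, Finset.mem_filter]
  by_cases hca : c = a
  · by_cases hda : d = a
    · exact absurd (hca.trans hda.symm) hcd
    by_cases hdb : d = b
    · exact absurd (by rw [hca, hdb]) hne
    rcases (gp_det hgen hab (Ne.symm hda) (Ne.symm hdb)).lt_or_gt with h' | h'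
    · exact Or.inr ⟨Or.inr (Or.inl hca), Or.inr (Or.inr ⟨hdW, by rw [hswap]; linarith⟩)⟩
    · exact Or.inl ⟨Or.inl hca, Or.inr (Or.inr ⟨hdW, h'⟩)⟩
  by_cases hcb : c = b
  · by_cases hda : d = a
    · exact absurd (by rw [hcb, hda, Sym2.eq_swap]) hne
    by_cases hdb : d = b
    · exact absurd (hcb.trans hdb.symm) hcd
    rcases (gp_det hgen hab (Ne.symm hda) (Ne.symm hdb)).lt_or_gt with h' | h'
    · exact Or.inr ⟨Or.inl hcb, Or.inr (Or.inr ⟨hdW, by rw [hswap]; linarith⟩)⟩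
    · exact Or.inl ⟨Or.inr (Or.inl hcb), Or.inr (Or.inr ⟨hdW, h'⟩)⟩
  · have hce := (gp_det hgen hab (Ne.symm hca) (Ne.symm hcb)).lt_or_gt
    by_cases hda : d = a
    · rcases hce with h' | h'
      · exact Or.inr ⟨Or.inr (Or.inr ⟨hcW, by rw [hswap]; linarith⟩), Or.inr (Or.inl hda)⟩
      · exact Or.inl ⟨Or.inr (Or.inr ⟨hcW, h'⟩), Or.inl hda⟩
    by_cases hdb : d = b
    · rcases hce with h' | h'
      · exact Or.inr ⟨Or.inr (Or.inr ⟨hcW, by rw [hswap]; linarith⟩), Or.inl hdb⟩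
      · exact Or.inl ⟨Or.inr (Or.inr ⟨hcW, h'⟩), Or.inr (Or.inl hdb)⟩
    have hde := (gp_det hgen hab (Ne.symm hda) (Ne.symm hdb)).lt_or_gt
    rcases hce with h' | h' <;> rcases hde with h'' | h''
    · exact Or.inr ⟨Or.inr (Or.inr ⟨hcW, by rw [hswap]; linarith⟩),
        Or.inr (Or.inr ⟨hdW, by rw [hswap]; linarith⟩)⟩
    · exact absurd (mul_neg_of_neg_of_pos h' h'' : VCross p a b c d) hnv
    · exact absurd (mul_neg_of_pos_of_neg h' h'' : VCross p a b c d) hnv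
    · exact Or.inl ⟨Or.inr (Or.inr ⟨hcW, h'⟩), Or.inr (Or.inr ⟨hdW, h''⟩)⟩

/-- NC: a family of pairwise non-crossing strict chords of `W` has at most
`|W| - 3` members. -/
lemma nc (hgen : GenPos p) (hconv : ConvexPos p) :
    ∀ (N : ℕ) (T : Finset (Sym2 (Fin n))) (W : Finset (Fin n)),
    T.card ≤ N →
    (∀ e ∈ T, ∃ a b : Fin n, e = s(a,b) ∧ a ≠ b ∧ a ∈ W ∧ b ∈ W ∧
        (∃ w ∈ W, 0 < det2 (p a) (p b) (p w)) ∧ (∃ w ∈ W, det2 (p a) (p b) (p w) < 0)) →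
    (∀ e ∈ T, ∀ f ∈ T, e ≠ f → ¬ SymCross p e f) →
    T = ∅ ∨ (T.card : ℤ) + 3 ≤ (W.card : ℤ) := by
  intro N
  induction N with
  | zero =>
    intro T W hcard _ _
    exact Or.inl (Finset.card_eq_zero.1 (Nat.le_zero.1 hcard))
  | succ N ih =>
    intro T W hcard h1 h2
    rcases Finset.eq_empty_or_nonempty T with rfl | ⟨e, he⟩
    · exact Or.inl rfl
    right
    obtain ⟨a, b, heab, hab, haW, hbW, hsp, hsn⟩ := h1 e he
    have hT'card : (T.erase e).card + 1 = T.card := Finset.card_erase_add_one he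
    -- the generic one-sided step
    have key : ∀ a' b' : Fin n, e = s(a',b') → a' ≠ b' → a' ∈ W → b' ∈ W →
        (∃ w ∈ W, 0 < det2 (p a') (p b') (p w)) →
        (((T.erase e).filter (fun f => ∀ x ∈ f,
            x ∈ insert a' (insert b' (W.filter fun w => 0 < det2 (p a') (p b') (p w))))).card : ℤ)
          + 3 ≤ ((insert a' (insert b' (W.filter fun w =>
              0 < det2 (p a') (p b') (p w)))).card : ℤ) := by
      intro a' b' heab' hab' haW' hbW' hwit
      set Wp := insert a' (insert b' (W.filter fun w => 0 < det2 (p a') (p b') (p w))) with hWp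
      have hmemWp : ∀ x : Fin n,
          x ∈ Wp ↔ (x = a' ∨ x = b' ∨ (x ∈ W ∧ 0 < det2 (p a') (p b') (p x))) := by
        intro x; simp [hWp, Finset.mem_insert, Finset.mem_filter]
      set Ts := (T.erase e).filter (fun f => ∀ x ∈ f, x ∈ Wp) with hTs
      have hTsub : Ts ⊆ T := fun f hf =>
        Finset.mem_of_mem_erase (Finset.mem_of_mem_filter f hf)
      have hTscard : Ts.card ≤ N := by
        have : Ts.card ≤ (T.erase e).card := Finset.card_le_card (Finset.filter_subset _ _)
        omega
      have hWpcard : 3 ≤ Wp.card := by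
        obtain ⟨w, hwW, hw⟩ := hwit
        have hwmem : w ∈ (W.filter fun w => 0 < det2 (p a') (p b') (p w)) :=
          Finset.mem_filter.2 ⟨hwW, hw⟩
        have h1' : 1 ≤ (W.filter fun w => 0 < det2 (p a') (p b') (p w)).card :=
          Finset.card_pos.2 ⟨w, hwmem⟩
        rw [hWp, wside_card hab']
        omega
      have := ih Ts Wp hTscard ?_ ?_
      · rcases this with hempty | hle
        · rw [hempty]; simp; omega
        · exact hle
      · -- h1 for the side
        intro f hf
        have hf' := Finset.mem_of_mem_filter f hf
        have hall := (Finset.mem_filter.1 hf).2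
        obtain ⟨c, d, rfl, hcd, hcW, hdW, hfsp, hfsn⟩ := h1 f (Finset.mem_of_mem_erase hf')
        have hcd_mem := sym2_forall_mem.1 hall
        have hne' : (s(c,d) : Sym2 (Fin n)) ≠ s(a',b') := by
          rw [← heab']; exact Finset.ne_of_mem_erase hf'
        have hcform := (hmemWp c).1 hcd_mem.1
        have hdform := (hmemWp d).1 hcd_mem.2
        refine ⟨c, d, rfl, hcd, hcd_mem.1, hcd_mem.2, ?_, ?_⟩
        · -- positive witness inside Wp : use f5 on the reversed chord
          obtain ⟨w, hwW, hw⟩ := hfsp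
          have hw' : det2 (p d) (p c) (p w) < 0 := by
            rw [det2_swap12 (p d) (p c) (p w)]; linarith
          obtain ⟨w', hw'form, hw'neg⟩ := f5 hgen hconv (W := W) hab' hcd.symm hdform hcform
            (by rw [Sym2.eq_swap]; exact hne') hwW hw'
          refine ⟨w', (hmemWp w').2 hw'form, ?_⟩
          rw [det2_swap12 (p d) (p c) (p w')] at hw'neg; linarith
        · -- negative witness inside Wp
          obtain ⟨w, hwW, hw⟩ := hfsn
          obtain ⟨w', hw'form, hw'neg⟩ := f5 hgen hconv (W := W) hab' hcd hcform hdform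
            hne' hwW hw
          exact ⟨w', (hmemWp w').2 hw'form, hw'neg⟩
      · -- h2 for the side
        intro e1 he1 e2 he2 hne12
        exact h2 e1 (hTsub he1) e2 (hTsub he2) hne12
    -- apply the step on both sides
    have hkey1 := key a b heab hab haW hbW hsp
    have hkey2 := key b a (by rw [heab, Sym2.eq_swap]) hab.symm hbW haW
      (by obtain ⟨w, hwW, hw⟩ := hsn
          exact ⟨w, hwW, by rw [det2_swap12 (p b) (p a) (p w)]; linarith⟩)
    -- covering
    have hcover : T.erase e ⊆
        ((T.erase e).filter (fun f => ∀ x ∈ f,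
            x ∈ insert a (insert b (W.filter fun w => 0 < det2 (p a) (p b) (p w))))) ∪
        ((T.erase e).filter (fun f => ∀ x ∈ f,
            x ∈ insert b (insert a (W.filter fun w => 0 < det2 (p b) (p a) (p w))))) := by
      intro f hf
      obtain ⟨c, d, rfl, hcd, hcW, hdW, _, _⟩ := h1 f (Finset.mem_of_mem_erase hf)
      have hne' : (s(c,d) : Sym2 (Fin n)) ≠ s(a,b) := by
        rw [← heab]; exact Finset.ne_of_mem_erase hf
      have hnv : ¬ VCross p a b c d := by
        intro hv
        exact h2 e he _ (Finset.mem_of_mem_erase hf)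
          (Ne.symm (Finset.ne_of_mem_erase hf))
          (heab ▸ symCross_of_vcross hgen hconv hv)
      rcases chord_side_dichotomy hgen hab hcd hcW hdW hne' hnv with ⟨h1', h2'⟩ | ⟨h1', h2'⟩
      · exact Finset.mem_union_left _
          (Finset.mem_filter.2 ⟨hf, sym2_forall_mem.2 ⟨h1', h2'⟩⟩)
      · exact Finset.mem_union_right _
          (Finset.mem_filter.2 ⟨hf, sym2_forall_mem.2 ⟨h1', h2'⟩⟩)
    have hcount : (T.erase e).card ≤
        ((T.erase e).filter (fun f => ∀ x ∈ f,
            x ∈ insert a (insert b (W.filter fun w => 0 < det2 (p a) (p b) (p w))))).card +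
        ((T.erase e).filter (fun f => ∀ x ∈ f,
            x ∈ insert b (insert a (W.filter fun w => 0 < det2 (p b) (p a) (p w))))).card :=
      le_trans (Finset.card_le_card hcover) (Finset.card_union_le _ _)
    -- size bookkeeping for the two sides
    have e3 : (W.filter fun w => 0 < det2 (p b) (p a) (p w))
        = (W.filter fun w => det2 (p a) (p b) (p w) < 0) := by
      apply Finset.filter_congr
      intro x _
      rw [det2_swap12 (p b) (p a) (p x)]
      constructor
      · intro h'; linarith
      · intro h'; linarith
    have e1 := wside_card (p := p) (W := W) hab
    have e2 := wside_card (p := p) (W := W) hab.symm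
    have e4 := side_partition hgen haW hbW hab
    rw [e3] at e2
    have hsides : ((insert a (insert b (W.filter fun w => 0 < det2 (p a) (p b) (p w)))).card : ℤ)
        + ((insert b (insert a (W.filter fun w => 0 < det2 (p b) (p a) (p w)))).card : ℤ)
        = (W.card : ℤ) + 2 := by
      rw [e3, e1, e2]
      have : ((W.filter fun w => 0 < det2 (p a) (p b) (p w)).card + 2)
          + ((W.filter fun w => det2 (p a) (p b) (p w) < 0).card + 2) = W.card + 2 := by omega
      exact_mod_cast this
    have hc1 : ((T.erase e).card : ℤ) + 1 = (T.card : ℤ) := by exact_mod_cast hT'card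
    have hc2 : ((T.erase e).card : ℤ) ≤
        (((T.erase e).filter (fun f => ∀ x ∈ f,
            x ∈ insert a (insert b (W.filter fun w => 0 < det2 (p a) (p b) (p w))))).card : ℤ) +
        (((T.erase e).filter (fun f => ∀ x ∈ f,
            x ∈ insert b (insert a (W.filter fun w => 0 < det2 (p b) (p a) (p w))))).card : ℤ) := by
      exact_mod_cast hcount
    linarith [hkey1, hkey2]
-- ### Part 7: base case of the main induction

lemma core_base (hgen : GenPos p) (hconv : ConvexPos p) {k : ℕ} (hk : 2 ≤ k)
    {G : SimpleGraph (Fin n)} {φ : Sym2 (Fin n) → Fin k} (hφ : CrossingFree G p φ)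
    (c : Fin k) (W : Finset (Fin n))
    (H3 : ∀ u v : Fin n, u ∈ W → v ∈ W → u ≠ v → s(u,v) ∈ G.edgeSet)
    (H5 : ∀ u v : Fin n, u ∈ W → v ∈ W → u ≠ v → φ s(u,v) = c →
      (∃ w ∈ W, 0 < det2 (p u) (p v) (p w)) → (∃ w ∈ W, det2 (p u) (p v) (p w) < 0) → False) :
    (W.card : ℤ) ≤ 2*(k:ℤ) - 1 := by
  classical
  by_contra hbig
  push_neg at hbig
  have hW4 : 2 * k ≤ W.card := by
    have : (2*(k:ℤ) - 1) < W.card := hbig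
    omega
  have hWge4 : 4 ≤ W.card := by omega
  -- ordered distinct pairs
  set Qall := (W ×ˢ W).filter (fun q => ¬ q.1 = q.2) with hQall
  have hQallcard : Qall.card + W.card = W.card * W.card := by
    have himg : (W ×ˢ W).filter (fun q : Fin n × Fin n => q.1 = q.2)
        = W.image (fun w => (w, w)) := by
      ext q
      simp only [Finset.mem_filter, Finset.mem_product, Finset.mem_image]
      constructor
      · rintro ⟨⟨h1, _⟩, h3⟩
        exact ⟨q.1, h1, Prod.ext rfl h3⟩
      · rintro ⟨w, hw, rfl⟩
        exact ⟨⟨hw, hw⟩, rfl⟩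
    have hdiag : ((W ×ˢ W).filter (fun q : Fin n × Fin n => q.1 = q.2)).card = W.card := by
      rw [himg, Finset.card_image_of_injective _ (fun x y h => (Prod.ext_iff.1 h).1)]
    have htot := Finset.card_filter_add_card_filter_not
      (s := W ×ˢ W) (p := fun q : Fin n × Fin n => q.1 = q.2)
    rw [hdiag, Finset.card_product] at htot
    rw [show Finset.filter (fun q : Fin n × Fin n => ¬ q.1 = q.2) (W ×ˢ W) = Qall
      from hQall.symm] at htot
    omega
  -- strict pairs
  set str := fun q : Fin n × Fin n => (∃ w ∈ W, 0 < det2 (p q.1) (p q.2) (p w)) ∧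
      (∃ w ∈ W, det2 (p q.1) (p q.2) (p w) < 0) with hstr
  set Q := Qall.filter str with hQ
  set NS := Qall.filter (fun q => ¬ str q) with hNS
  have hQNS : Q.card + NS.card = Qall.card :=
    Finset.card_filter_add_card_filter_not (s := Qall) (p := str)
  -- a non-strict pair has all of W weakly on one side
  have hside : ∀ r : Fin n × Fin n, r ∈ NS →
      (∀ w ∈ W, 0 ≤ det2 (p r.1) (p r.2) (p w)) ∨
      (∀ w ∈ W, det2 (p r.1) (p r.2) (p w) ≤ 0) := by
    intro r hr
    have hns := (Finset.mem_filter.1 hr).2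
    rw [hstr] at hns
    rcases not_and_or.1 hns with h | h
    · right
      push_neg at h
      exact h
    · left
      push_neg at h
      exact h
  -- non-strict pairs are few
  have hNScard : NS.card ≤ W.card * 2 := by
    have := Finset.card_le_card_of_injOn
      (f := fun q : Fin n × Fin n =>
        (q.1, decide (∀ w ∈ W, 0 ≤ det2 (p q.1) (p q.2) (p w))))
      (s := NS) (t := W ×ˢ (Finset.univ : Finset Bool)) ?_ ?_
    · rwa [Finset.card_product, Finset.card_univ, Fintype.card_bool] at this
    · intro q hq
      have hmem := (Finset.mem_filter.1 ((Finset.mem_filter.1 hq).1)).1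
      rw [Finset.mem_product] at hmem
      exact Finset.mem_product.2 ⟨hmem.1, Finset.mem_univ _⟩
    · intro q hq q' hq' heq
      simp only [Finset.mem_coe] at hq hq'
      have h1 := (Prod.ext_iff.1 heq).1
      have h2 := (Prod.ext_iff.1 heq).2
      dsimp only at h1 h2
      have hqprod := (Finset.mem_filter.1 ((Finset.mem_filter.1 hq).1)).1
      have hq'prod := (Finset.mem_filter.1 ((Finset.mem_filter.1 hq').1)).1
      rw [Finset.mem_product] at hqprod hq'prod
      have hqne : q.1 ≠ q.2 := (Finset.mem_filter.1 ((Finset.mem_filter.1 hq).1)).2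
      have hq'ne : q'.1 ≠ q'.2 := (Finset.mem_filter.1 ((Finset.mem_filter.1 hq').1)).2
      -- show q.2 = q'.2
      have hkey : det2 (p q.1) (p q.2) (p q'.2) = 0 → q.2 = q'.2 := by
        intro hz
        by_contra hne22
        have h21 : q.1 ≠ q'.2 := by rw [h1]; exact hq'ne
        exact gp_det hgen hqne h21 hne22 hz
      by_cases hP : ∀ w ∈ W, 0 ≤ det2 (p q.1) (p q.2) (p w)
      · have hP' : ∀ w ∈ W, 0 ≤ det2 (p q'.1) (p q'.2) (p w) := by
          have : decide (∀ w ∈ W, 0 ≤ det2 (p q.1) (p q.2) (p w)) = true :=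
            decide_eq_true_iff.2 hP
          rw [h2] at this
          exact decide_eq_true_iff.1 this
        have hv1 : 0 ≤ det2 (p q.1) (p q.2) (p q'.2) := hP q'.2 hq'prod.2
        have hv2 : 0 ≤ det2 (p q'.1) (p q'.2) (p q.2) := hP' q.2 hqprod.2
        rw [← h1, det2_swap23] at hv2
        exact Prod.ext h1 (hkey (le_antisymm (by linarith) hv1))
      · have hP' : ¬ ∀ w ∈ W, 0 ≤ det2 (p q'.1) (p q'.2) (p w) := by
          intro hcon
          have : decide (∀ w ∈ W, 0 ≤ det2 (p q'.1) (p q'.2) (p w)) = true :=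
            decide_eq_true_iff.2 hcon
          rw [← h2] at this
          exact hP (decide_eq_true_iff.1 this)
        have hq2 := (hside q hq).resolve_left hP
        have hq'2 := (hside q' hq').resolve_left hP'
        have hv1 : det2 (p q.1) (p q.2) (p q'.2) ≤ 0 := hq2 q'.2 hq'prod.2
        have hv2 : det2 (p q'.1) (p q'.2) (p q.2) ≤ 0 := hq'2 q.2 hqprod.2
        rw [← h1, det2_swap23] at hv2
        exact Prod.ext h1 (hkey (le_antisymm hv1 (by linarith)))
  -- every strict pair is an edge of color ≠ c
  have hQcol : ∀ q ∈ Q, φ s(q.1, q.2) ∈ (Finset.univ : Finset (Fin k)).erase c := by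
    intro q hq
    obtain ⟨hqall, hqstr⟩ := Finset.mem_filter.1 hq
    obtain ⟨hqprod, hqne⟩ := Finset.mem_filter.1 hqall
    rw [Finset.mem_product] at hqprod
    refine Finset.mem_erase.2 ⟨?_, Finset.mem_univ _⟩
    intro hcol
    exact H5 q.1 q.2 hqprod.1 hqprod.2 hqne hcol hqstr.1 hqstr.2
  have hQsum := Finset.card_eq_sum_card_fiberwise hQcol
  -- each color class is small
  have hclass : ∀ c' ∈ (Finset.univ : Finset (Fin k)).erase c,
      (Q.filter (fun q => φ s(q.1, q.2) = c')).card ≤ 2 * (W.card - 3) := by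
    intro c' _
    set Tc := Q.filter (fun q => φ s(q.1, q.2) = c') with hTc
    set Ic := Tc.image (fun q => s(q.1, q.2)) with hIc
    have hTIc : Tc.card ≤ 2 * Ic.card := by
      apply Finset.card_le_mul_card_image
      intro b hb
      obtain ⟨q0, hq0, hq0b⟩ := Finset.mem_image.1 hb
      have hsub : Tc.filter (fun q => s(q.1, q.2) = b) ⊆ {(q0.1, q0.2), (q0.2, q0.1)} := by
        intro q hq
        have hqb := (Finset.mem_filter.1 hq).2
        rw [← hq0b] at hqb
        rcases Sym2.eq_iff.1 hqb with ⟨ha', hb'⟩ | ⟨ha', hb'⟩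
        · simp [Prod.ext_iff, ha', hb']
        · simp [Prod.ext_iff, ha', hb']
      calc (Tc.filter (fun q => s(q.1, q.2) = b)).card
          ≤ ({(q0.1, q0.2), (q0.2, q0.1)} : Finset (Fin n × Fin n)).card :=
            Finset.card_le_card hsub
        _ ≤ 2 := Finset.card_insert_le _ _ |>.trans (by simp)
    have hIcW : Ic = ∅ ∨ (Ic.card : ℤ) + 3 ≤ (W.card : ℤ) := by
      apply nc hgen hconv Ic.card Ic W le_rfl
      · intro e he
        obtain ⟨q, hq, hqe⟩ := Finset.mem_image.1 he
        obtain ⟨hqall, hqstr⟩ := Finset.mem_filter.1 ((Finset.mem_filter.1 hq).1)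
        obtain ⟨hqprod, hqne⟩ := Finset.mem_filter.1 hqall
        rw [Finset.mem_product] at hqprod
        exact ⟨q.1, q.2, hqe.symm, hqne, hqprod.1, hqprod.2, hqstr.1, hqstr.2⟩
      · intro e he f hf hef
        intro hSC
        obtain ⟨q, hq, hqe⟩ := Finset.mem_image.1 he
        obtain ⟨q', hq', hq'f⟩ := Finset.mem_image.1 hf
        have hqin := Finset.mem_filter.1 hq
        have hq'in := Finset.mem_filter.1 hq'
        obtain ⟨hqall, hqstr⟩ := Finset.mem_filter.1 hqin.1
        obtain ⟨hq'all, hq'str⟩ := Finset.mem_filter.1 hq'in.1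
        obtain ⟨hqprod, hqne⟩ := Finset.mem_filter.1 hqall
        obtain ⟨hq'prod, hq'ne⟩ := Finset.mem_filter.1 hq'all
        rw [Finset.mem_product] at hqprod hq'prod
        have heG : e ∈ G.edgeSet := by
          rw [← hqe]; exact H3 q.1 q.2 hqprod.1 hqprod.2 hqne
        have hfG : f ∈ G.edgeSet := by
          rw [← hq'f]; exact H3 q'.1 q'.2 hq'prod.1 hq'prod.2 hq'ne
        have hcol : φ e = φ f := by
          rw [← hqe, ← hq'f, hqin.2, hq'in.2]
        exact hφ e heG f hfG hef hcol (edgeCross_of_symCross hgen hconv hSC)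
    have hIcfin : Ic.card ≤ W.card - 3 := by
      rcases hIcW with hempty | hle
      · rw [hempty]; simp
      · omega
    omega
  have hQcard : Q.card ≤ (k - 1) * (2 * (W.card - 3)) := by
    rw [hQsum]
    calc ∑ c' ∈ (Finset.univ : Finset (Fin k)).erase c,
          (Q.filter (fun q => φ s(q.1, q.2) = c')).card
        ≤ ∑ c' ∈ (Finset.univ : Finset (Fin k)).erase c, 2 * (W.card - 3) :=
          Finset.sum_le_sum hclass
      _ = (k - 1) * (2 * (W.card - 3)) := by
          rw [Finset.sum_const, smul_eq_mul,
            Finset.card_erase_of_mem (Finset.mem_univ c), Finset.card_univ,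
            Fintype.card_fin]
  -- final arithmetic contradiction
  have hfin : W.card * W.card ≤ W.card + W.card * 2 + (k-1) * (2 * (W.card - 3)) := by
    omega
  have hx : (2:ℤ) * k ≤ W.card := by exact_mod_cast hW4
  have hk' : (2:ℤ) ≤ k := by exact_mod_cast hk
  have h3le : 3 ≤ W.card := by omega
  have h1le : 1 ≤ k := by omega
  zify [h3le, h1le] at hfin
  nlinarith [hfin, mul_pos (by linarith : (0:ℤ) < (W.card:ℤ) - (2*k-2))
    (by linarith : (0:ℤ) < (W.card:ℤ) - 3)]
-- ### Part 8: the main induction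

lemma two_sides_card (hgen : GenPos p) {W : Finset (Fin n)} {a b : Fin n}
    (haW : a ∈ W) (hbW : b ∈ W) (hab : a ≠ b) :
    ((insert a (insert b (W.filter fun w => 0 < det2 (p a) (p b) (p w)))).card : ℤ)
      + ((insert b (insert a (W.filter fun w => 0 < det2 (p b) (p a) (p w)))).card : ℤ)
      = (W.card : ℤ) + 2 := by
  have e3 : (W.filter fun w => 0 < det2 (p b) (p a) (p w))
      = (W.filter fun w => det2 (p a) (p b) (p w) < 0) := by
    apply Finset.filter_congr
    intro x _
    rw [det2_swap12 (p b) (p a) (p x)]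
    constructor
    · intro h'; linarith
    · intro h'; linarith
  have e1 := wside_card (p := p) (W := W) hab
  have e2 := wside_card (p := p) (W := W) hab.symm
  rw [e3] at e2
  have e4 := side_partition hgen haW hbW hab
  rw [e3, e1, e2]
  have : ((W.filter fun w => 0 < det2 (p a) (p b) (p w)).card + 2)
      + ((W.filter fun w => det2 (p a) (p b) (p w) < 0).card + 2) = W.card + 2 := by omega
  exact_mod_cast this

lemma core (hgen : GenPos p) (hconv : ConvexPos p) {k : ℕ} (hk : 2 ≤ k)
    {G : SimpleGraph (Fin n)} {φ : Sym2 (Fin n) → Fin k} (hφ : CrossingFree G p φ)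
    (c : Fin k) :
    ∀ (N : ℕ) (S : Finset (Sym2 (Fin n))) (W : Finset (Fin n)),
    S.card ≤ N →
    (∀ e ∈ S, ∃ a b : Fin n, e = s(a,b) ∧ a ≠ b ∧ a ∈ W ∧ b ∈ W) →
    (∀ e ∈ S, ∀ f ∈ S, e ≠ f → ¬ SymCross p e f) →
    (∀ u v : Fin n, u ∈ W → v ∈ W → u ≠ v →
        (∀ e ∈ S, e ≠ s(u,v) → ¬ SymCross p e s(u,v)) → s(u,v) ∈ G.edgeSet) →
    (∀ u v : Fin n, u ∈ W → v ∈ W → u ≠ v → s(u,v) ∈ G.edgeSet → φ s(u,v) = c →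
        (∃ w ∈ W, 0 < det2 (p u) (p v) (p w)) → (∃ w ∈ W, det2 (p u) (p v) (p w) < 0) →
        s(u,v) ∈ S) →
    (W.card : ℤ) ≤ (2*(k:ℤ) - 3) * S.card + (2*(k:ℤ) - 1) := by
  intro N
  induction N with
  | zero =>
    intro S W hcard H1 H2 H3 H5
    have hS : S = ∅ := Finset.card_eq_zero.1 (Nat.le_zero.1 hcard)
    subst hS
    rw [Finset.card_empty]
    have := core_base hgen hconv hk hφ c W
      (fun u v hu hv huv => H3 u v hu hv huv (fun e he => absurd he (Finset.notMem_empty e)))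
      (fun u v hu hv huv hcol hpos hneg => by
        have hedge := H3 u v hu hv huv (fun e he => absurd he (Finset.notMem_empty e))
        exact absurd (H5 u v hu hv huv hedge hcol hpos hneg) (Finset.notMem_empty _))
    push_cast
    linarith
  | succ N ih =>
    intro S W hcard H1 H2 H3 H5
    rcases Finset.eq_empty_or_nonempty S with rfl | ⟨e, he⟩
    · rw [Finset.card_empty]
      have := core_base hgen hconv hk hφ c W
        (fun u v hu hv huv => H3 u v hu hv huv (fun e he => absurd he (Finset.notMem_empty e)))
        (fun u v hu hv huv hcol hpos hneg => by
          have hedge := H3 u v hu hv huv (fun e he => absurd he (Finset.notMem_empty e))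
          exact absurd (H5 u v hu hv huv hedge hcol hpos hneg) (Finset.notMem_empty _))
      push_cast
      linarith
    obtain ⟨a, b, heab, hab, haW, hbW⟩ := H1 e he
    have hScard : (S.erase e).card + 1 = S.card := Finset.card_erase_add_one he
    -- the one-sided step
    have key : ∀ a' b' : Fin n, e = s(a',b') → a' ≠ b' → a' ∈ W → b' ∈ W →
        ((insert a' (insert b' (W.filter fun w => 0 < det2 (p a') (p b') (p w)))).card : ℤ)
          ≤ (2*(k:ℤ) - 3) * (((S.erase e).filter (fun f => ∀ x ∈ f,
              x ∈ insert a' (insert b' (W.filter fun w =>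
                0 < det2 (p a') (p b') (p w))))).card : ℤ) + (2*(k:ℤ) - 1) := by
      intro a' b' heab' hab' haW' hbW'
      set Wp := insert a' (insert b' (W.filter fun w => 0 < det2 (p a') (p b') (p w)))
        with hWp
      have hmemWp : ∀ x : Fin n,
          x ∈ Wp ↔ (x = a' ∨ x = b' ∨ (x ∈ W ∧ 0 < det2 (p a') (p b') (p x))) := by
        intro x; simp [hWp, Finset.mem_insert, Finset.mem_filter]
      have hWpsub : Wp ⊆ W := by
        intro x hx
        rcases (hmemWp x).1 hx with rfl | rfl | ⟨h', _⟩
        · exact haW'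
        · exact hbW'
        · exact h'
      have hLge : ∀ x, x ∈ Wp → 0 ≤ det2 (p a') (p b') (p x) := by
        intro x hx
        rcases (hmemWp x).1 hx with rfl | rfl | ⟨_, h'⟩
        · rw [det2_self13]
        · rw [det2_self23]
        · exact le_of_lt h'
      set Ss := (S.erase e).filter (fun f => ∀ x ∈ f, x ∈ Wp) with hSs
      have hSsub : Ss ⊆ S := fun f hf =>
        Finset.mem_of_mem_erase (Finset.mem_of_mem_filter f hf)
      have hSscard : Ss.card ≤ N := by
        have : Ss.card ≤ (S.erase e).card := Finset.card_le_card (Finset.filter_subset _ _)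
        omega
      apply ih Ss Wp hSscard
      · -- H1
        intro f hf
        obtain ⟨c', d', hfcd, hcd, _, _⟩ := H1 f (hSsub hf)
        have hall := (Finset.mem_filter.1 hf).2
        rw [hfcd] at hall
        have hmem2 := sym2_forall_mem.1 hall
        exact ⟨c', d', hfcd, hcd, hmem2.1, hmem2.2⟩
      · -- H2
        intro e1 he1 e2 he2 hne12
        exact H2 e1 (hSsub he1) e2 (hSsub he2) hne12
      · -- H3
        intro u v huW hvW huv hnc
        apply H3 u v (hWpsub huW) (hWpsub hvW) huv
        intro e' he' hne'' hSC
        by_cases he'e : e' = e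
        · -- e' is the splitting chord itself
          have hVC := (symCross_elim (he'e ▸ hSC) heab' rfl).1
          have := mul_nonneg (hLge u huW) (hLge v hvW)
          rw [VCross] at hVC
          linarith
        have he'erase : e' ∈ Finset.erase S e := Finset.mem_erase.2 ⟨he'e, he'⟩
        obtain ⟨c', d', he'cd, hcd, hcW, hdW⟩ := H1 e' he'
        by_cases hsuv_e : (s(u,v) : Sym2 (Fin n)) = e
        · exact H2 e' he' e he he'e (hsuv_e ▸ hSC)
        have hne3 : (s(c',d') : Sym2 (Fin n)) ≠ s(a',b') := by
          rw [← he'cd, ← heab']; exact he'e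
        have hnv : ¬ VCross p a' b' c' d' := by
          intro hv
          exact H2 e he e' he' (Ne.symm he'e)
            (by rw [heab', he'cd]; exact symCross_of_vcross hgen hconv hv)
        rcases chord_side_dichotomy hgen hab' hcd hcW hdW hne3 hnv with ⟨hc1, hc2⟩ | ⟨hc1, hc2⟩
        · -- e' lies on the positive side : it is in Ss, apply hnc
          have : e' ∈ Ss := Finset.mem_filter.2
            ⟨he'erase, by rw [he'cd]; exact sym2_forall_mem.2 ⟨hc1, hc2⟩⟩
          exact hnc e' this hne'' hSC
        · -- e' lies on the negative side : geometric contradiction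
          have hVC := symCross_elim hSC he'cd rfl
          -- values of det2 (p a') (p b') on the negative side
          have hLle : ∀ x, x ∈ insert b' (insert a'
              (W.filter fun w => 0 < det2 (p b') (p a') (p w))) →
              det2 (p a') (p b') (p x) ≤ 0 := by
            intro x hx
            simp only [Finset.mem_insert, Finset.mem_filter] at hx
            rcases hx with rfl | rfl | ⟨_, h'⟩
            · rw [det2_self23]
            · rw [det2_self13]
            · rw [det2_swap12 (p b') (p a') (p x)] at h'; linarith
          -- strict sums
          have hsum_uv : 0 < det2 (p a') (p b') (p u) + det2 (p a') (p b') (p v) := by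
            rcases (hmemWp u).1 huW with hu' | hu' | ⟨_, hu'⟩ <;>
              rcases (hmemWp v).1 hvW with hv' | hv' | ⟨_, hv'⟩
            · exact absurd (hu'.trans hv'.symm) huv
            · exact absurd (by rw [hu', hv', ← heab'] : (s(u,v) : Sym2 (Fin n)) = e) hsuv_e
            · rw [hu', det2_self13]; linarith
            · exact absurd (by rw [hu', hv', Sym2.eq_swap, ← heab'] :
                (s(u,v) : Sym2 (Fin n)) = e) hsuv_e
            · exact absurd (hu'.trans hv'.symm) huv
            · rw [hu', det2_self23]; linarith
            · rw [hv', det2_self13]; linarith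
            · rw [hv', det2_self23]; linarith
            · linarith
          have hsum_cd : det2 (p a') (p b') (p c') + det2 (p a') (p b') (p d') < 0 := by
            have hcle := hLle c' hc1
            have hdle := hLle d' hc2
            rcases hcle.lt_or_eq with h' | h'
            · linarith
            rcases hdle.lt_or_eq with h'' | h''
            · linarith
            -- both zero : c', d' ∈ {a', b'} so e' = e, contradiction
            exfalso
            have hcab : c' = a' ∨ c' = b' := by
              by_contra hcon
              push_neg at hcon
              exact gp_det hgen hab' (Ne.symm hcon.1) (Ne.symm hcon.2) h'
            have hdab : d' = a' ∨ d' = b' := by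
              by_contra hcon
              push_neg at hcon
              exact gp_det hgen hab' (Ne.symm hcon.1) (Ne.symm hcon.2) h''
            rcases hcab with rfl | rfl <;> rcases hdab with h3 | h3
            · exact hcd h3.symm
            · exact hne3 (by rw [h3])
            · exact hne3 (by rw [h3, Sym2.eq_swap])
            · exact hcd h3.symm
          obtain ⟨x, hx1, hx2⟩ := segCross_of_vcross hgen hconv hVC.2
          obtain ⟨t, ht0, ht1, hev1⟩ := det2_open_eval (q := p a') (r := p b') hx1
          obtain ⟨s', hs0, hs1, hev2⟩ := det2_open_eval (q := p a') (r := p b') hx2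
          have hpos := pos_combo ht0 ht1 (hLge u huW) (hLge v hvW) hsum_uv
          have hneg := neg_combo hs0 hs1 (hLle c' hc1) (hLle d' hc2) hsum_cd
          rw [← hev1] at hpos
          rw [← hev2] at hneg
          linarith
      · -- H5
        intro u v huW hvW huv hedge hcol hpos hneg
        have hposW : ∃ w ∈ W, 0 < det2 (p u) (p v) (p w) := by
          obtain ⟨w, hw, h'⟩ := hpos; exact ⟨w, hWpsub hw, h'⟩
        have hnegW : ∃ w ∈ W, det2 (p u) (p v) (p w) < 0 := by
          obtain ⟨w, hw, h'⟩ := hneg; exact ⟨w, hWpsub hw, h'⟩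
        have hmemS := H5 u v (hWpsub huW) (hWpsub hvW) huv hedge hcol hposW hnegW
        refine Finset.mem_filter.2 ⟨Finset.mem_erase.2 ⟨?_, hmemS⟩,
          sym2_forall_mem.2 ⟨huW, hvW⟩⟩
        intro hsuv
        rw [heab'] at hsuv
        rcases Sym2.eq_iff.1 hsuv with ⟨hu', hv'⟩ | ⟨hu', hv'⟩
        · obtain ⟨w, hw, hwlt⟩ := hneg
          have := hLge w hw
          rw [hu', hv'] at hwlt
          linarith
        · obtain ⟨w, hw, hwgt⟩ := hpos
          have := hLge w hw
          rw [hu', hv', det2_swap12 (p b') (p a') (p w)] at hwgt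
          linarith
    -- combine the two sides
    have hkey1 := key a b heab hab haW hbW
    have hkey2 := key b a (by rw [heab, Sym2.eq_swap]) hab.symm hbW haW
    set S1 := (S.erase e).filter (fun f => ∀ x ∈ f,
      x ∈ insert a (insert b (W.filter fun w => 0 < det2 (p a) (p b) (p w)))) with hS1
    set S2 := (S.erase e).filter (fun f => ∀ x ∈ f,
      x ∈ insert b (insert a (W.filter fun w => 0 < det2 (p b) (p a) (p w)))) with hS2
    have hdisj : Disjoint S1 S2 := by
      rw [Finset.disjoint_left]
      intro f hf1 hf2
      have hferase : f ∈ S.erase e := (Finset.mem_filter.1 hf1).1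
      obtain ⟨c', d', hfcd, hcd, hcW, hdW⟩ := H1 f (Finset.mem_of_mem_erase hferase)
      have h1' := (Finset.mem_filter.1 hf1).2
      have h2' := (Finset.mem_filter.1 hf2).2
      rw [hfcd] at h1' h2'
      have m1 := sym2_forall_mem.1 h1'
      have m2 := sym2_forall_mem.1 h2'
      have hboth : ∀ x : Fin n,
          x ∈ insert a (insert b (W.filter fun w => 0 < det2 (p a) (p b) (p w))) →
          x ∈ insert b (insert a (W.filter fun w => 0 < det2 (p b) (p a) (p w))) →
          x = a ∨ x = b := by
        intro x hx1 hx2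
        simp only [Finset.mem_insert, Finset.mem_filter] at hx1 hx2
        rcases hx1 with h' | h' | ⟨_, h'⟩
        · exact Or.inl h'
        · exact Or.inr h'
        rcases hx2 with h'' | h'' | ⟨_, h''⟩
        · exact Or.inr h''
        · exact Or.inl h''
        · rw [det2_swap12 (p b) (p a) (p x)] at h''
          linarith
      have hc' := hboth c' m1.1 m2.1
      have hd' := hboth d' m1.2 m2.2
      apply Finset.ne_of_mem_erase hferase
      rw [hfcd, heab]
      rcases hc' with rfl | rfl <;> rcases hd' with h3 | h3
      · exact absurd h3.symm hcd
      · rw [h3]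
      · rw [h3, Sym2.eq_swap]
      · exact absurd h3.symm hcd
    have hucard : S1.card + S2.card ≤ (S.erase e).card := by
      rw [← Finset.card_union_of_disjoint hdisj]
      exact Finset.card_le_card
        (Finset.union_subset (Finset.filter_subset _ _) (Finset.filter_subset _ _))
    have hsides := two_sides_card hgen haW hbW hab
    have h2k3 : (0:ℤ) ≤ 2*(k:ℤ) - 3 := by
      have : (2:ℤ) ≤ (k:ℤ) := by exact_mod_cast hk
      linarith
    have hsum : (S1.card : ℤ) + (S2.card : ℤ) ≤ (S.card : ℤ) - 1 := by
      have h1'' : ((S1.card + S2.card : ℕ) : ℤ) ≤ ((S.erase e).card : ℤ) := by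
        exact_mod_cast hucard
      have h2'' : ((S.erase e).card : ℤ) + 1 = (S.card : ℤ) := by exact_mod_cast hScard
      push_cast at h1''
      linarith
    have hm := mul_le_mul_of_nonneg_left hsum h2k3
    have hdistrib : (2*(k:ℤ) - 3) * (S1.card : ℤ) + (2*(k:ℤ) - 3) * (S2.card : ℤ)
        = (2*(k:ℤ) - 3) * ((S1.card : ℤ) + (S2.card : ℤ)) := by ring
    linarith [hkey1, hkey2]
lemma sym2_exists_rep {α : Type} (e : Sym2 α) : ∃ a b : α, e = s(a,b) := by
  induction e using Sym2.ind with
  | _ x y => exact ⟨x, y, rfl⟩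

end Geometry

theorem stmt8 (n k : ℕ) (hk : 2 ≤ k) (hn : 2 * k - 1 ≤ n)
    (G : SimpleGraph (Fin n)) (p : Fin n → Pt) (φ : Sym2 (Fin n) → Fin k)
    (hgen : GenPos p) (hconv : ConvexPos p)
    (hφ : CrossingFree G p φ) (hsat : PrecoloredSaturated G p φ) :
    ∀ c : Fin k,
      (2 * (k : ℤ) - 3) * (({e : Sym2 (Fin n) | e ∈ G.edgeSet ∧ φ e = c ∧
          ¬ IsOuterEdge p e}.ncard : ℤ)) ≥ (n : ℤ) - 2 * k + 1 := by
  intro c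
  classical
  set S0 := Finset.univ.filter (fun e : Sym2 (Fin n) =>
    e ∈ G.edgeSet ∧ φ e = c ∧ ¬ IsOuterEdge p e) with hS0
  have hset : {e : Sym2 (Fin n) | e ∈ G.edgeSet ∧ φ e = c ∧ ¬ IsOuterEdge p e}
      = (↑S0 : Set (Sym2 (Fin n))) := by
    ext e
    simp [hS0]
  rw [hset, Set.ncard_coe_finset]
  have hcore := core hgen hconv hk hφ c S0.card S0 Finset.univ le_rfl ?_ ?_ ?_ ?_
  · rw [Finset.card_univ, Fintype.card_fin] at hcore
    linarith
  · -- H1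
    intro e he
    have heG : e ∈ G.edgeSet := ((Finset.mem_filter.1 he).2).1
    obtain ⟨a, b, rfl⟩ := sym2_exists_rep e
    have hadj : G.Adj a b := (SimpleGraph.mem_edgeSet G).1 heG
    exact ⟨a, b, rfl, hadj.ne, Finset.mem_univ a, Finset.mem_univ b⟩
  · -- H2
    intro e he f hf hef hSC
    have heP := (Finset.mem_filter.1 he).2
    have hfP := (Finset.mem_filter.1 hf).2
    exact hφ e heP.1 f hfP.1 hef (heP.2.1.trans hfP.2.1.symm)
      (edgeCross_of_symCross hgen hconv hSC)
  · -- H3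
    intro u v _ _ huv hnc
    by_contra hne
    have hnadj : ¬ G.Adj u v := fun hA => hne ((SimpleGraph.mem_edgeSet G).2 hA)
    obtain ⟨x, y, hxyG, hxycol, hVC1, hVC2⟩ := blocker hgen hφ hsat huv hnadj c
    have hSC : SymCross p s(x,y) s(u,v) := ⟨x, y, u, v, rfl, rfl, hVC1, hVC2⟩
    have hmem : s(x,y) ∈ S0 := Finset.mem_filter.2
      ⟨Finset.mem_univ _, hxyG, hxycol, not_outer_of_vcross hVC1⟩
    have hne2 : (s(x,y) : Sym2 (Fin n)) ≠ s(u,v) := fun h => hne (h ▸ hxyG)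
    exact hnc s(x,y) hmem hne2 hSC
  · -- H5
    intro u v _ _ huv hedge hcol hpos hneg
    refine Finset.mem_filter.2 ⟨Finset.mem_univ _, hedge, hcol, ?_⟩
    rintro ⟨u', v', heq, hside⟩
    obtain ⟨wp, _, hwp⟩ := hpos
    obtain ⟨wn, _, hwn⟩ := hneg
    have hwpu : wp ≠ u := by rintro rfl; rw [det2_self13] at hwp; linarith
    have hwpv : wp ≠ v := by rintro rfl; rw [det2_self23] at hwp; linarith
    have hwnu : wn ≠ u := by rintro rfl; rw [det2_self13] at hwn; linarith
    have hwnv : wn ≠ v := by rintro rfl; rw [det2_self23] at hwn; linarith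
    rcases Sym2.eq_iff.1 heq with ⟨hu', hv'⟩ | ⟨hu', hv'⟩
    · subst hu'; subst hv'
      rcases hside with hs | hs
      · have := hs wn hwnu hwnv; linarith
      · have := hs wp hwpu hwpv; linarith
    · subst hu'; subst hv'
      rcases hside with hs | hs
      · have := hs wp hwpv hwpu
        rw [det2_swap12 (p v) (p u) (p wp)] at this
        linarith
      · have := hs wn hwnv hwnu
        rw [det2_swap12 (p v) (p u) (p wn)] at this
        linarith
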